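/- In any weakly lexicographic chores-only instance, every EFX allocation satisfies MMS: if for every pair of agents i, j and every chore c in A_i, agent i weakly prefers A_i \ {c} to A_j, then every agent i has s_i(A_i) ≥_lex MMS_i. -/

import Mathlib

/-- Strict lexicographic dominance on integer score vectors: `LexLtZ f g` means `f <_lex g`. -/
def LexLtZ {k : ℕ} (f g : Fin k → ℤ) : Prop :=
  ∃ j : Fin k, f j < g j ∧ ∀ i : Fin k, i < j → f i = g i

/-- Weak lexicographic dominance on integer score vectors. -/
def LexLeZ {k : ℕ} (f g : Fin k → ℤ) : Prop := f = g ∨ LexLtZ f g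

/-- Score vector of a bundle `X` of chores, given indifference classes `cls`
(class `0` is the most important, i.e. worst, chores); coordinates are negated counts. -/
def cscore {m k : ℕ} (cls : Fin m → Fin k) (X : Finset (Fin m)) : Fin k → ℤ :=
  fun l => -(((X.filter fun a => cls a = l).card : ℤ))

/-- An `n`-partition of the items `Fin m`: every item belongs to exactly one bundle. -/
def IsPartition {n m : ℕ} (A : Fin n → Finset (Fin m)) : Prop :=
  ∀ c : Fin m, ∃! i : Fin n, c ∈ A i

open Finset

/-- Totality of the lexicographic order. -/
lemma lexZ_total {k : ℕ} (f g : Fin k → ℤ) : LexLeZ f g ∨ LexLtZ g f := by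
  by_cases hfg : f = g
  · exact Or.inl (Or.inl hfg)
  · obtain ⟨j, hj⟩ := Function.ne_iff.mp hfg
    have hne : (Finset.univ.filter fun j => f j ≠ g j).Nonempty := ⟨j, by simp [hj]⟩
    set j₀ := (Finset.univ.filter fun j => f j ≠ g j).min' hne with hj₀def
    have hj₀ : f j₀ ≠ g j₀ := (Finset.mem_filter.mp (Finset.min'_mem _ hne)).2
    have hmin : ∀ l, l < j₀ → f l = g l := by
      intro l hl
      by_contra h
      exact absurd (Finset.min'_le _ l (Finset.mem_filter.mpr ⟨Finset.mem_univ _, h⟩))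
        (not_le.mpr hl)
    rcases lt_or_gt_of_ne hj₀ with h | h
    · exact Or.inl (Or.inr ⟨j₀, h, hmin⟩)
    · exact Or.inr ⟨j₀, h, fun l hl => (hmin l hl).symm⟩

/-- Summing any weight function over the bundles of a partition gives the total weight. -/
lemma partition_sum {n m : ℕ} {P : Fin n → Finset (Fin m)} (hP : IsPartition P) (w : Fin m → ℤ) :
    ∑ j, ∑ c ∈ P j, w c = ∑ c, w c := by
  have h1 : ∀ j, ∑ c ∈ P j, w c = ∑ c : Fin m, if c ∈ P j then w c else 0 := by
    intro j
    rw [Finset.sum_ite_mem, Finset.univ_inter]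
  simp_rw [h1]
  rw [Finset.sum_comm]
  apply Finset.sum_congr rfl
  intro c _
  obtain ⟨j₀, hj₀, huniq⟩ := hP c
  rw [Finset.sum_eq_single j₀]
  · simp [hj₀]
  · intro b _ hb
    simp only [ite_eq_right_iff]
    intro h; exact absurd (huniq b h) hb
  · simp

/-- Count of chores of class `t` (ℕ-indexed) in a bundle. -/
def ncZ {m k : ℕ} (cls : Fin m → Fin k) (t : ℕ) (X : Finset (Fin m)) : ℤ :=
  ((X.filter fun a => (cls a : ℕ) = t).card : ℤ)

/-- Weight of a chore in the base-(m+1) encoding truncated at class `L`. -/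
def wgt {m k : ℕ} (cls : Fin m → Fin k) (L : ℕ) (c : Fin m) : ℤ :=
  if (cls c : ℕ) ≤ L then ((m : ℤ) + 1) ^ (L - (cls c : ℕ)) else 0

/-- Base-(m+1) encoding of the (negated) score vector, truncated at class `L`. -/
def Psi {m k : ℕ} (cls : Fin m → Fin k) (L : ℕ) (X : Finset (Fin m)) : ℤ :=
  ∑ t ∈ Finset.range (L + 1), ncZ cls t X * ((m : ℤ) + 1) ^ (L - t)

lemma ncZ_nonneg {m k : ℕ} (cls : Fin m → Fin k) (t : ℕ) (X : Finset (Fin m)) :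
    0 ≤ ncZ cls t X := Int.ofNat_nonneg _

lemma ncZ_le {m k : ℕ} (cls : Fin m → Fin k) (t : ℕ) (X : Finset (Fin m)) :
    ncZ cls t X ≤ (m : ℤ) := by
  unfold ncZ
  have h1 : (X.filter fun a => (cls a : ℕ) = t).card ≤ m := by
    calc (X.filter fun a => (cls a : ℕ) = t).card ≤ X.card := Finset.card_filter_le _ _
    _ ≤ Fintype.card (Fin m) := Finset.card_le_univ _
    _ = m := Fintype.card_fin m
  exact_mod_cast h1

lemma ncZ_eq_neg_cscore {m k : ℕ} (cls : Fin m → Fin k) (t : Fin k) (X : Finset (Fin m)) :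
    ncZ cls (t : ℕ) X = -(cscore cls X t) := by
  unfold ncZ cscore
  simp only [neg_neg]
  congr 2
  apply Finset.filter_congr
  intro a _
  simp [Fin.val_eq_val]

lemma Psi_eq_sum_wgt {m k : ℕ} (cls : Fin m → Fin k) (L : ℕ) (X : Finset (Fin m)) :
    Psi cls L X = ∑ c ∈ X, wgt cls L c := by
  unfold Psi ncZ
  have h1 : ∀ t : ℕ, ((X.filter fun a => (cls a : ℕ) = t).card : ℤ)
      = ∑ c ∈ X, if (cls c : ℕ) = t then (1 : ℤ) else 0 := by
    intro t
    rw [Finset.card_filter]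
    push_cast
    rfl
  simp_rw [h1, Finset.sum_mul, ite_mul, one_mul, zero_mul]
  rw [Finset.sum_comm]
  apply Finset.sum_congr rfl
  intro c _
  rw [Finset.sum_ite_eq (Finset.range (L + 1)) ((cls c : ℕ)) (fun t => ((m : ℤ) + 1) ^ (L - t))]
  simp [wgt, Nat.lt_succ_iff]

lemma geom_aux (m d : ℕ) :
    (m : ℤ) * ∑ e ∈ Finset.range d, ((m : ℤ) + 1) ^ e + 1 = ((m : ℤ) + 1) ^ d := by
  have h := geom_sum_mul ((m : ℤ) + 1) d
  simp only [add_sub_cancel_right] at h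
  linarith [h]

/-- Key strict inequality: a lexicographic strict advantage at a class `ι ≤ L`
forces a strict inequality of the truncated encodings. -/
lemma psi_lt {m k : ℕ} {cls : Fin m → Fin k} {Y Z : Finset (Fin m)} {L ι : ℕ}
    (hι : ι ≤ L) (hlt : ncZ cls ι Z < ncZ cls ι Y)
    (heq : ∀ t : ℕ, t < ι → ncZ cls t Y = ncZ cls t Z) :
    Psi cls L Z < Psi cls L Y := by
  set B : ℤ := (m : ℤ) + 1 with hBdef
  have hB : (0 : ℤ) < B := by positivity
  have hsub : Psi cls L Y - Psi cls L Z
      = ∑ t ∈ range (L + 1), (ncZ cls t Y - ncZ cls t Z) * B ^ (L - t) := by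
    unfold Psi
    rw [← Finset.sum_sub_distrib]
    apply Finset.sum_congr rfl
    intro t _
    ring
  have hsplit : ∑ t ∈ range (L + 1), (ncZ cls t Y - ncZ cls t Z) * B ^ (L - t)
      = (∑ t ∈ range (ι + 1), (ncZ cls t Y - ncZ cls t Z) * B ^ (L - t))
        + ∑ t ∈ Finset.Ico (ι + 1) (L + 1), (ncZ cls t Y - ncZ cls t Z) * B ^ (L - t) := by
    rw [Finset.range_eq_Ico, Finset.range_eq_Ico]
    exact (Finset.sum_Ico_consecutive (fun t => (ncZ cls t Y - ncZ cls t Z) * B ^ (L - t)) (Nat.zero_le (ι + 1)) (by omega : ι + 1 ≤ L + 1)).symm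
  have hfirst : ∑ t ∈ range (ι + 1), (ncZ cls t Y - ncZ cls t Z) * B ^ (L - t)
      = (ncZ cls ι Y - ncZ cls ι Z) * B ^ (L - ι) := by
    rw [Finset.sum_range_succ]
    rw [Finset.sum_eq_zero]
    · ring
    · intro t ht
      rw [heq t (Finset.mem_range.mp ht)]
      ring
  have hterm : B ^ (L - ι) ≤ (ncZ cls ι Y - ncZ cls ι Z) * B ^ (L - ι) := by
    have h1 : (1 : ℤ) ≤ ncZ cls ι Y - ncZ cls ι Z := by omega
    nlinarith [pow_pos hB (L - ι)]
  have hsecond : -((B ^ (L - ι)) - 1)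
      ≤ ∑ t ∈ Finset.Ico (ι + 1) (L + 1), (ncZ cls t Y - ncZ cls t Z) * B ^ (L - t) := by
    have h2 : ∑ t ∈ Finset.Ico (ι + 1) (L + 1), -((m : ℤ) * B ^ (L - t))
        ≤ ∑ t ∈ Finset.Ico (ι + 1) (L + 1), (ncZ cls t Y - ncZ cls t Z) * B ^ (L - t) := by
      apply Finset.sum_le_sum
      intro t _
      have h3 : -(m : ℤ) ≤ ncZ cls t Y - ncZ cls t Z := by
        have := ncZ_nonneg cls t Y
        have := ncZ_le cls t Z
        omega
      have h4 : (0 : ℤ) ≤ B ^ (L - t) := le_of_lt (pow_pos hB _)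
      nlinarith
    have h5 : ∑ t ∈ Finset.Ico (ι + 1) (L + 1), ((m : ℤ) * B ^ (L - t))
        = (m : ℤ) * ∑ t ∈ Finset.Ico (ι + 1) (L + 1), B ^ (L - t) := by
      rw [Finset.mul_sum]
    have h6 : ∑ t ∈ Finset.Ico (ι + 1) (L + 1), B ^ (L - t)
        = ∑ e ∈ Finset.range (L - ι), B ^ e := by
      rw [Finset.sum_Ico_eq_sum_range]
      have h7 : L + 1 - (ι + 1) = L - ι := by omega
      rw [h7]
      rw [← Finset.sum_range_reflect]
      apply Finset.sum_congr rfl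
      intro e he
      congr 1
      have := Finset.mem_range.mp he
      omega
    have h8 := geom_aux m (L - ι)
    calc -((B ^ (L - ι)) - 1)
        = -((m : ℤ) * ∑ e ∈ Finset.range (L - ι), B ^ e) := by rw [hBdef]; linarith [h8]
      _ = ∑ t ∈ Finset.Ico (ι + 1) (L + 1), -((m : ℤ) * B ^ (L - t)) := by
          rw [Finset.sum_neg_distrib, h5, h6]
      _ ≤ _ := h2
  have : 1 ≤ Psi cls L Y - Psi cls L Z := by
    rw [hsub, hsplit, hfirst]
    linarith
  linarith

/-- Lex dominance implies the corresponding inequality of truncated encodings. -/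
lemma psi_mono {m k : ℕ} {cls : Fin m → Fin k} {Y Z : Finset (Fin m)} (L' : Fin k)
    (hle : LexLeZ (cscore cls Y) (cscore cls Z)) :
    Psi cls (L' : ℕ) Z ≤ Psi cls (L' : ℕ) Y := by
  have hkey : ∀ t : ℕ, ∀ _ht : t < (L' : ℕ) + 1, ∀ X : Finset (Fin m),
      ncZ cls t X = -(cscore cls X ⟨t, by have := L'.isLt; omega⟩) := by
    intro t ht X
    exact ncZ_eq_neg_cscore cls ⟨t, by have := L'.isLt; omega⟩ X
  rcases hle with heq | ⟨ι, hι, hpre⟩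
  · apply le_of_eq
    apply Finset.sum_congr rfl
    intro t ht
    have ht' := Finset.mem_range.mp ht
    rw [hkey t ht' Z, hkey t ht' Y, heq]
  · by_cases hc : (ι : ℕ) ≤ (L' : ℕ)
    · apply le_of_lt
      apply psi_lt (ι := (ι : ℕ)) hc
      · rw [hkey _ (by omega) Z, hkey _ (by omega) Y]
        have hZ : (⟨(ι : ℕ), by omega⟩ : Fin k) = ι := rfl
        rw [hZ]
        omega
      · intro t ht
        rw [hkey t (by omega) Y, hkey t (by omega) Z, hpre ⟨t, by omega⟩ ht]
    · apply le_of_eq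
      apply Finset.sum_congr rfl
      intro t ht
      have ht' := Finset.mem_range.mp ht
      rw [hkey t ht' Z, hkey t ht' Y, hpre ⟨t, by omega⟩ (by simp [Fin.lt_def]; omega)]

theorem stmt5 {n m : ℕ} (K : Fin n → ℕ) (cls : ∀ i : Fin n, Fin m → Fin (K i))
    (A : Fin n → Finset (Fin m)) (hA : IsPartition A)
    (hEFX : ∀ i j : Fin n, ∀ c ∈ A i,
      LexLeZ (cscore (cls i) (A j)) (cscore (cls i) ((A i).erase c))) :
    ∀ i : Fin n, ∀ P : Fin n → Finset (Fin m), IsPartition P →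
      ∃ j : Fin n, LexLeZ (cscore (cls i) (P j)) (cscore (cls i) (A i)) := by
  intro i P hP
  by_contra hcon
  push_neg at hcon
  have hall : ∀ j, LexLtZ (cscore (cls i) (A i)) (cscore (cls i) (P j)) := by
    intro j
    rcases lexZ_total (cscore (cls i) (P j)) (cscore (cls i) (A i)) with h | h
    · exact absurd h (hcon j)
    · exact h
  -- A i is nonempty
  have hAne : (A i).Nonempty := by
    rcases Finset.eq_empty_or_nonempty (A i) with he | h
    · exfalso
      obtain ⟨ι, hι, -⟩ := hall i
      have h1 : cscore (cls i) (A i) ι = 0 := by simp [cscore, he]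
      have h2 : cscore (cls i) (P i) ι ≤ 0 := by
        unfold cscore
        simp
      omega
    · exact h
  have himg : ((A i).image (cls i)).Nonempty := hAne.image _
  set L' : Fin (K i) := ((A i).image (cls i)).max' himg with hL'def
  obtain ⟨cstar, hcstar, hclscstar⟩ := Finset.mem_image.mp (Finset.max'_mem _ himg)
  -- bound for the bundles of P
  have hPb : ∀ j, Psi (cls i) (L' : ℕ) (P j) ≤ Psi (cls i) (L' : ℕ) (A i) - 1 := by
    intro j
    obtain ⟨ι, hι, hpre⟩ := hall j
    have hlt' : ncZ (cls i) (ι : ℕ) (P j) < ncZ (cls i) (ι : ℕ) (A i) := by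
      rw [ncZ_eq_neg_cscore, ncZ_eq_neg_cscore]
      omega
    have hpos : 0 < ncZ (cls i) (ι : ℕ) (A i) :=
      lt_of_le_of_lt (ncZ_nonneg (cls i) (ι : ℕ) (P j)) hlt'
    have hex : ∃ c ∈ A i, cls i c = ι := by
      have hcard : 0 < ((A i).filter fun a => ((cls i a : ℕ) = (ι : ℕ))).card := by
        have h' := hpos
        unfold ncZ at h'
        exact_mod_cast h'
      obtain ⟨c, hc⟩ := Finset.card_pos.mp hcard
      rw [Finset.mem_filter] at hc
      exact ⟨c, hc.1, Fin.ext hc.2⟩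
    obtain ⟨c, hcA, hcι⟩ := hex
    have hιL : (ι : ℕ) ≤ (L' : ℕ) :=
      Finset.le_max' _ _ (Finset.mem_image.mpr ⟨c, hcA, hcι⟩)
    have hstrict : Psi (cls i) (L' : ℕ) (P j) < Psi (cls i) (L' : ℕ) (A i) := by
      apply psi_lt hιL hlt'
      intro t ht
      have htk : t < K i := by have := ι.isLt; omega
      have h1 := hpre ⟨t, htk⟩ ht
      have e1 : ncZ (cls i) t (A i) = -(cscore (cls i) (A i) ⟨t, htk⟩) :=
        ncZ_eq_neg_cscore (cls i) ⟨t, htk⟩ (A i)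
      have e2 : ncZ (cls i) t (P j) = -(cscore (cls i) (P j) ⟨t, htk⟩) :=
        ncZ_eq_neg_cscore (cls i) ⟨t, htk⟩ (P j)
      rw [e1, e2, h1]
    omega
  -- bound for the bundles of A, via EFX
  have herase : Psi (cls i) (L' : ℕ) ((A i).erase cstar) = Psi (cls i) (L' : ℕ) (A i) - 1 := by
    rw [Psi_eq_sum_wgt, Psi_eq_sum_wgt, Finset.sum_erase_eq_sub hcstar]
    have hw : wgt (cls i) (L' : ℕ) cstar = 1 := by
      rw [← hL'def] at hclscstar
      simp [wgt, hclscstar]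
    rw [hw]
  have hAb : ∀ j, Psi (cls i) (L' : ℕ) (A i) - 1 ≤ Psi (cls i) (L' : ℕ) (A j) := by
    intro j
    have h := psi_mono L' (hEFX i j cstar hcstar)
    rw [herase] at h
    exact h
  -- sums over both partitions agree
  have hsum : ∑ j, Psi (cls i) (L' : ℕ) (P j) = ∑ j, Psi (cls i) (L' : ℕ) (A j) := by
    simp_rw [Psi_eq_sum_wgt]
    rw [partition_sum hP, partition_sum hA]
  -- final contradiction
  have h1 : ∑ j, Psi (cls i) (L' : ℕ) (P j)
      ≤ ∑ _j : Fin n, (Psi (cls i) (L' : ℕ) (A i) - 1) :=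
    Finset.sum_le_sum (fun j _ => hPb j)
  have h2 : ∑ _j : Fin n, (Psi (cls i) (L' : ℕ) (A i) - 1)
      = (Psi (cls i) (L' : ℕ) (A i) - 1)
        + ∑ _j ∈ Finset.univ.erase i, (Psi (cls i) (L' : ℕ) (A i) - 1) :=
    (Finset.add_sum_erase _ _ (Finset.mem_univ i)).symm
  have h3 : ∑ j, Psi (cls i) (L' : ℕ) (A j)
      = Psi (cls i) (L' : ℕ) (A i)
        + ∑ j ∈ Finset.univ.erase i, Psi (cls i) (L' : ℕ) (A j) :=
    (Finset.add_sum_erase _ _ (Finset.mem_univ i)).symm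
  have h4 : ∑ _j ∈ Finset.univ.erase i, (Psi (cls i) (L' : ℕ) (A i) - 1)
      ≤ ∑ j ∈ Finset.univ.erase i, Psi (cls i) (L' : ℕ) (A j) :=
    Finset.sum_le_sum (fun j _ => hAb j)
  linarith
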